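/- A ring R is left Q-copure split if and only if (a) every Q-copure left ideal of R is projective and (b) every free left R-module is Q-copure Baer injective. -/

import Mathlib

universe u

variable {R : Type u}

/-- A linear map `f : A → B` is `Q`-copure if every module in `Q` is injective
relative to `f`. -/
def IsCopure [Ring R] (Q : ModuleCat.{u} R → Prop) {A B : Type u}
    [AddCommGroup A] [Module R A] [AddCommGroup B] [Module R B] (f : A →ₗ[R] B) : Prop :=
  ∀ M : ModuleCat.{u} R, Q M → ∀ g : A →ₗ[R] M, ∃ h : B →ₗ[R] M, ∀ a : A, h (f a) = g a

/-- A left ideal `I` of `R` is `Q`-copure if every module in `Q` is injective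
relative to the inclusion `I → R`. -/
def CopureIdeal [Ring R] (Q : ModuleCat.{u} R → Prop) (I : Ideal R) : Prop :=
  ∀ M : ModuleCat.{u} R, Q M → ∀ g : I →ₗ[R] M, ∃ h : R →ₗ[R] M, ∀ x : I, h x = g x

/-- `N` is `Q`-copure Baer injective if every homomorphism from a `Q`-copure
left ideal of `R` into `N` extends to `R`. -/
def CopureBaerInjective [Ring R] (Q : ModuleCat.{u} R → Prop) (N : Type*)
    [AddCommGroup N] [Module R N] : Prop :=
  ∀ I : Ideal R, CopureIdeal Q I → ∀ g : I →ₗ[R] N, ∃ h : R →ₗ[R] N, ∀ x : I, h x = g x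

theorem copureSplit_iff_hereditary_and_free [Ring R] (Q : ModuleCat.{u} R → Prop) :
    (∀ I : Ideal R, CopureIdeal Q I → ∃ J : Ideal R, IsCompl I J) ↔
      ((∀ I : Ideal R, CopureIdeal Q I → Module.Projective R I) ∧
        ∀ (F : Type u) [AddCommGroup F] [Module R F], Module.Free R F →
          CopureBaerInjective Q F) := by
  constructor
  · intro hsplit
    constructor
    · intro I hI
      obtain ⟨J, hJ⟩ := hsplit I hI
      exact Module.Projective.of_split I.subtype (I.projectionOnto J hJ)
        (by ext x; simp)
    · intro F _ _ _ I hI g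
      obtain ⟨J, hJ⟩ := hsplit I hI
      refine ⟨g.comp (I.projectionOnto J hJ), fun x => ?_⟩
      simp
  · rintro ⟨hproj, hfree⟩ I hI
    have hP : Module.Projective R I := hproj I hI
    obtain ⟨s, hs⟩ := (Module.projective_def).mp hP
    obtain ⟨h, hh⟩ := hfree (↥I →₀ R) inferInstance I hI s
    set p : R →ₗ[R] I := (Finsupp.linearCombination R id).comp h with hp
    have hpx : ∀ x : I, p (x : R) = x := by
      intro x
      simp [hp, hh x, hs x]
    exact ⟨LinearMap.ker p, LinearMap.isCompl_of_proj hpx⟩
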